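/- Reduction correctness for 3CNF satisfiability via set cover of clauses: let c_1,...,c_n be 3-clauses over variables x_1,...,x_m, where each clause c_i = c_{i,1} ∨ c_{i,2} ∨ c_{i,3}. For each variable x_j define two sets: P_j = {i : some literal of c_i equals x_j} and N_j = {i : some literal of c_i equals ¬x_j}. Then ⋀_i c_i is satisfiable if and only if there is a choice function picking for each j either P_j or N_j such that the union of chosen sets equals {1,...,n}. -/
import Mathlib


theorem stmt_12 (n m : ℕ) (c : Fin n → Fin 3 → Fin m × Bool) :
    (∃ ν : Fin m → Bool, ∀ i, ∃ k, ν (c i k).1 = (c i k).2) ↔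
      (∃ σ : Fin m → Bool, ∀ i : Fin n, ∃ j : Fin m,
        i ∈ (if σ j then {i' : Fin n | ∃ k, c i' k = (j, true)}
             else {i' : Fin n | ∃ k, c i' k = (j, false)})) := by
  constructor
  · rintro ⟨ν, hν⟩
    refine ⟨ν, fun i => ?_⟩
    obtain ⟨k, hk⟩ := hν i
    refine ⟨(c i k).1, ?_⟩
    rcases hb : (c i k).2 with _ | _ <;> rw [hb] at hk <;> simp [hk]
    · exact ⟨k, by rw [← hb]⟩
    · exact ⟨k, by rw [← hb]⟩
  · rintro ⟨σ, hσ⟩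
    refine ⟨σ, fun i => ?_⟩
    obtain ⟨j, hj⟩ := hσ i
    by_cases h : σ j <;> simp [h] at hj <;> obtain ⟨k, hk⟩ := hj <;>
      exact ⟨k, by simp [hk, h]⟩
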